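/- Let p ≥ 3 be odd and define t_k = (−1)^k Σ_{j=0}^{k−1} (p/((p+1)/2+j))C((p+1)/2+j, 2j+1) · ((p−2)/((p−1)/2+k−j−1))C((p−1)/2+k−j−1, 2(k−j)−1) and u_k = ((−1)^k (p−1)/k)·C(p+k−2, 2k−1). Then t_k = u_k for all k = 2, …, p−1. -/

import Mathlib

open Finset

/-- Lucas triangle coefficient: absolute value of the coefficient of
`x^(n-2j)` in the Dickson polynomial `D_n(x,1)`. -/
def lucasC (n j : ℕ) : ℕ :=
  if 2 * j ≤ n then
    (if j = 0 then (if n = 0 then 2 else 1)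
     else (n - j).choose j + (n - j - 1).choose (j - 1))
  else 0

/-- Signed Dickson coefficient, `ℤ`-indexed (zero for negative index). -/
def dickC (n : ℕ) (j : ℤ) : ℤ :=
  if 0 ≤ j then (-1)^j.toNat * lucasC n j.toNat else 0

lemma lucasC_zero (n : ℕ) : lucasC n 0 = if n = 0 then 2 else 1 := by
  unfold lucasC; rw [if_pos (by omega), if_pos rfl]

lemma lucasC_succ' (s j : ℕ) :
    lucasC (s + 2*(j+1)) (j+1) = (s + j + 1).choose (j+1) + (s + j).choose j := by
  unfold lucasC
  rw [if_pos (by omega), if_neg (by omega)]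
  congr 2 <;> omega

lemma lucasC_of_gt {n j : ℕ} (h : n < 2 * j) : lucasC n j = 0 := by
  unfold lucasC; rw [if_neg (by omega)]

lemma lucasC_top (j : ℕ) : lucasC (2*j) j = 2 := by
  cases j with
  | zero => simp [lucasC_zero]
  | succ j =>
      have := lucasC_succ' 0 j
      simp only [Nat.zero_add] at this
      rw [this, Nat.choose_self, Nat.choose_self]

lemma lucasC_rec (n J : ℕ) : lucasC (n+2) (J+1) = lucasC (n+1) (J+1) + lucasC n J := by
  rcases lt_trichotomy (2*J) n with h | h | h
  · rcases Nat.eq_zero_or_pos J with rfl | hJ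
    · obtain ⟨n', rfl⟩ : ∃ n', n = n' + 1 := ⟨n - 1, by omega⟩
      rw [show n' + 1 + 2 = (n'+1) + 2*(0+1) by ring, lucasC_succ',
          show n' + 1 + 1 = n' + 2*(0+1) by ring, lucasC_succ', lucasC_zero,
          if_neg (by omega)]
      simp [Nat.choose_one_right]
    · obtain ⟨J', rfl⟩ : ∃ J', J = J' + 1 := ⟨J - 1, by omega⟩
      obtain ⟨s, hs⟩ : ∃ s, n = s + 2 * J' + 3 := ⟨n - 2*J' - 3, by omega⟩
      subst hs
      rw [show s + 2*J' + 3 + 2 = (s+1) + 2*(J'+1+1) by ring, lucasC_succ',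
          show s + 2*J' + 3 + 1 = s + 2*(J'+1+1) by ring, lucasC_succ',
          show s + 2*J' + 3 = (s+1) + 2*(J'+1) by ring, lucasC_succ']
      have p1 := Nat.choose_succ_succ' (s + 1 + (J'+1)) (J' + 1)
      have p2 := Nat.choose_succ_succ' (s + (J'+1)) J'
      have p3 := Nat.choose_succ_succ' (s + (J'+1)) (J' + 1)
      ring_nf at p1 p2 p3 ⊢
      omega
  · subst h
    rw [show 2*J + 2 = 2*(J+1) by ring, lucasC_top, lucasC_top,
        lucasC_of_gt (by omega)]
  · rw [lucasC_of_gt (by omega), lucasC_of_gt (by omega), lucasC_of_gt (by omega)]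

lemma lucasC_mul {n j : ℕ} (h : 2*j ≤ n) : (n - j) * lucasC n j = n * (n-j).choose j := by
  cases j with
  | zero =>
      rw [lucasC_zero, Nat.sub_zero, Nat.choose_zero_right]
      rcases Nat.eq_zero_or_pos n with rfl | hn
      · simp
      · rw [if_neg (by omega)]
  | succ j =>
      obtain ⟨s, rfl⟩ : ∃ s, n = s + 2*(j+1) := ⟨n - 2*(j+1), by omega⟩
      rw [lucasC_succ', show s + 2*(j+1) - (j+1) = s + j + 1 by omega]
      have key := Nat.add_one_mul_choose_eq (s+j) j
      rw [Nat.mul_add, key]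
      ring

lemma lucasC_cast {n j : ℕ} (hn : 1 ≤ n) (h : 2*j ≤ n) :
    (lucasC n j : ℚ) = (n:ℚ) / ((n - j : ℕ):ℚ) * ((n-j).choose j : ℚ) := by
  have hj : j < n := by omega
  have hz : ((n - j : ℕ):ℚ) ≠ 0 := Nat.cast_ne_zero.mpr (by omega)
  rw [eq_comm, div_mul_eq_mul_div, div_eq_iff hz]
  exact_mod_cast ((lucasC_mul h).symm.trans (Nat.mul_comm _ _))

lemma dickC_neg {n : ℕ} {j : ℤ} (h : j < 0) : dickC n j = 0 := by
  unfold dickC; rw [if_neg (by omega)]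

lemma dickC_coe (n J : ℕ) : dickC n (J : ℤ) = (-1)^J * lucasC n J := by
  unfold dickC; rw [if_pos (by positivity), Int.toNat_natCast]

lemma dickC_of_gt {n : ℕ} {i : ℤ} (h : (n:ℤ) < 2*i) : dickC n i = 0 := by
  have hi : 0 ≤ i := by omega
  obtain ⟨J, rfl⟩ : ∃ J : ℕ, i = (J:ℤ) := ⟨i.toNat, by omega⟩
  rw [dickC_coe, lucasC_of_gt (by exact_mod_cast h), Nat.cast_zero, mul_zero]

lemma dickC_zero (n : ℕ) : dickC n 0 = if n = 0 then 2 else 1 := by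
  rw [show (0:ℤ) = ((0:ℕ):ℤ) by simp, dickC_coe, lucasC_zero]; norm_num

lemma dickC_rec (n : ℕ) (j : ℤ) : dickC (n+2) j = dickC (n+1) j - dickC n (j-1) := by
  rcases lt_trichotomy j 0 with h | rfl | h
  · rw [dickC_neg h, dickC_neg h, dickC_neg (by omega), sub_zero]
  · rw [show dickC n ((0:ℤ)-1) = 0 from dickC_neg (by norm_num), sub_zero,
        show (0:ℤ) = ((0:ℕ):ℤ) by simp, dickC_coe, dickC_coe, lucasC_zero, lucasC_zero]
    norm_num
  · obtain ⟨J, rfl⟩ : ∃ J : ℕ, j = ((J+1 : ℕ) : ℤ) := ⟨(j-1).toNat, by omega⟩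
    rw [dickC_coe, dickC_coe, show ((J+1:ℕ):ℤ) - 1 = ((J:ℕ):ℤ) by push_cast; ring,
        dickC_coe, lucasC_rec]
    push_cast
    ring

/-- The coefficient-level form of `D_a · D_b = D_{a+b} + D_{a-b}` for Dickson
polynomials of the first kind with parameter 1. -/
lemma dickC_conv : ∀ b a K : ℕ, b ≤ a →
    ∑ j ∈ range (K+1), dickC a (j:ℤ) * dickC b ((K:ℤ) - (j:ℤ))
      = dickC (a+b) (K:ℤ) + dickC (a-b) ((K:ℤ) - (b:ℤ)) := by
  intro b
  induction b using Nat.twoStepInduction with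
  | zero =>
      intro a K _
      rw [Finset.sum_eq_single_of_mem K (by simp)]
      · rw [sub_self, dickC_zero, if_pos rfl, Nat.add_zero, Nat.sub_zero]
        push_cast
        rw [sub_zero]
        ring
      · intro j hj hne
        simp only [mem_range] at hj
        rw [dickC_of_gt (n := 0) (by push_cast; omega), mul_zero]
  | one =>
      intro a K ha
      rw [Finset.sum_eq_single_of_mem K (by simp)]
      · rw [sub_self, dickC_zero, if_neg (by omega), mul_one]
        have h := dickC_rec (a-1) ((K:ℤ))
        rw [show a - 1 + 2 = a + 1 by omega, show a - 1 + 1 = a by omega] at h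
        rw [h]
        push_cast
        ring
      · intro j hj hne
        simp only [mem_range] at hj
        rw [dickC_of_gt (n := 1) (by push_cast; omega), mul_zero]
  | more b ih0 ih1 =>
      intro a K ha
      have hb1 : b + 1 ≤ a := by omega
      have hb0 : b ≤ a := by omega
      have step : ∀ j ∈ range (K+1),
          dickC a (j:ℤ) * dickC (b+2) ((K:ℤ) - (j:ℤ))
            = dickC a (j:ℤ) * dickC (b+1) ((K:ℤ) - (j:ℤ))
              - dickC a (j:ℤ) * dickC b ((K:ℤ) - (j:ℤ) - 1) := by
        intro j _
        rw [dickC_rec b ((K:ℤ) - (j:ℤ))]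
        ring
      rw [Finset.sum_congr rfl step, Finset.sum_sub_distrib, ih1 a K hb1]
      have h2 : ∑ j ∈ range (K+1), dickC a (j:ℤ) * dickC b ((K:ℤ) - (j:ℤ) - 1)
          = dickC (a+b) ((K:ℤ)-1) + dickC (a-b) ((K:ℤ) - 1 - (b:ℤ)) := by
        cases K with
        | zero =>
            simp only [Nat.zero_add, Finset.sum_range_one, Nat.cast_zero]
            rw [show (0:ℤ) - 0 - 1 = -1 by ring,
                show dickC b (-1) = 0 from dickC_neg (by norm_num), mul_zero,
                show (0:ℤ) - 1 = -1 by ring,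
                show dickC (a+b) (-1) = 0 from dickC_neg (by norm_num),
                show dickC (a-b) (-1 - (b:ℤ)) = 0 from dickC_neg (by omega)]
            ring
        | succ K' =>
            rw [Finset.sum_range_succ,
                dickC_neg (j := ((K'+1:ℕ):ℤ) - ((K'+1:ℕ):ℤ) - 1) (by push_cast; omega),
                mul_zero, add_zero]
            have := ih0 a K' hb0
            rw [show ((K':ℕ):ℤ) = ((K'+1:ℕ):ℤ) - 1 by push_cast; ring] at this
            rw [← this]
            apply Finset.sum_congr rfl
            intro j hj
            congr 1
            ring
      rw [h2]
      have r1 := dickC_rec (a+b) ((K:ℤ))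
      have r2 := dickC_rec (a-b-2) ((K:ℤ) - (b:ℤ) - 1)
      rw [show a - b - 2 + 2 = a - b by omega, show a - b - 2 + 1 = a - (b+1) by omega] at r2
      rw [show a + b + 2 = a + (b+2) by ring] at r1
      rw [show a - b - 2 = a - (b+2) by omega] at r2
      rw [show a + b + 1 = a + (b+1) by ring] at r1
      rw [show ((K:ℤ) - (b:ℤ) - 1) - 1 = (K:ℤ) - ((b:ℤ)+2) by ring] at r2
      rw [show (K:ℤ) - ((b+1:ℕ):ℤ) = (K:ℤ) - (b:ℤ) - 1 by push_cast; ring,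
          show (K:ℤ) - ((b+2:ℕ):ℤ) = (K:ℤ) - ((b:ℤ)+2) by push_cast; ring,
          show (K:ℤ) - 1 - (b:ℤ) = (K:ℤ) - (b:ℤ) - 1 by ring] at *
      omega

lemma neg_one_pow_congr' {A B : ℕ} (h : A % 2 = B % 2) : (-1:ℚ)^A = (-1:ℚ)^B := by
  rcases Nat.even_or_odd A with hA | hA
  · have hB : Even B := by rw [Nat.even_iff] at *; omega
    rw [hA.neg_one_pow, hB.neg_one_pow]
  · have hB : Odd B := by rw [Nat.odd_iff] at *; omega
    rw [hA.neg_one_pow, hB.neg_one_pow]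


lemma lucasC_factor1 (m j : ℕ) (hj : j ≤ m) :
    ((lucasC (2*m+1) (m-j) : ℕ) : ℚ)
      = ((2*m+1:ℕ):ℚ) / ((m+1 + j:ℕ):ℚ) * ((m+1 + j).choose (2*j+1) : ℚ) := by
  have e1 : 2*m+1 - (m-j) = m+1+j := by omega
  have e2 : (m+1+j).choose (m-j) = (m+1+j).choose (2*j+1) := by
    rw [show m - j = m+1+j - (2*j+1) by omega]
    exact Nat.choose_symm (by omega)
  rw [lucasC_cast (by omega) (by omega), e1, e2]

lemma lucasC_factor2 (m i : ℕ) (hi1 : 1 ≤ i) (hi2 : i ≤ m) :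
    ((lucasC (2*m-1) (m-i) : ℕ) : ℚ)
      = ((2*m-1:ℕ):ℚ) / ((m + i - 1:ℕ):ℚ) * ((m + i - 1).choose (2*i-1) : ℚ) := by
  have e1 : 2*m-1 - (m-i) = m+i-1 := by omega
  have e2 : (m+i-1).choose (m-i) = (m+i-1).choose (2*i-1) := by
    rw [show m - i = m+i-1 - (2*i-1) by omega]
    exact Nat.choose_symm (by omega)
  rw [lucasC_cast (by omega) (by omega), e1, e2]

/-- The convolution coefficient `t_k` of the paper. -/
def tConv (p k : ℕ) : ℚ :=
  (-1) ^ k * ∑ j ∈ Finset.range k,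
    ((p : ℚ) / (((p + 1) / 2 + j : ℕ) : ℚ)) *
      (Nat.choose ((p + 1) / 2 + j) (2 * j + 1) : ℚ) *
    ((((p : ℚ) - 2) / (((p - 1) / 2 + (k - j - 1) : ℕ) : ℚ)) *
      (Nat.choose ((p - 1) / 2 + (k - j - 1)) (2 * (k - j) - 1) : ℚ))

/-- The closed form `u_k` of the paper. -/
def uClosed (p k : ℕ) : ℚ :=
  (-1) ^ k * (((p : ℚ) - 1) / (k : ℚ)) * (Nat.choose (p + k - 2) (2 * k - 1) : ℚ)

theorem t_eq_u (p : ℕ) (hp : Odd p) (hp3 : 3 ≤ p) (k : ℕ)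
    (hk1 : 2 ≤ k) (hk2 : k ≤ p - 1) :
    tConv p k = uClosed p k := by
  obtain ⟨m, rfl⟩ : ∃ m, p = 2*m+1 := by
    obtain ⟨t, ht⟩ := hp; exact ⟨t, by omega⟩
  have hm : 1 ≤ m := by omega
  have hk2' : k ≤ 2*m := by omega
  set K : ℕ := 2*m - k with hK
  -- the convolution identity for Dickson coefficients
  have hconv := dickC_conv (2*m-1) (2*m+1) K (by omega)
  rw [show 2*m+1 + (2*m-1) = 4*m by omega, show 2*m+1 - (2*m-1) = 2 by omega,
      show dickC 2 ((K:ℤ) - ((2*m-1:ℕ):ℤ)) = 0 from dickC_neg (by omega),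
      add_zero] at hconv
  -- main computation
  have h : ∑ j ∈ Finset.range k,
      (((2*m+1 : ℕ) : ℚ) / (((m+1 + j : ℕ)) : ℚ)) *
        (Nat.choose (m+1 + j) (2 * j + 1) : ℚ) *
      (((((2*m+1 : ℕ) : ℚ) - 2) / (((m + (k - j - 1) : ℕ)) : ℚ)) *
        (Nat.choose (m + (k - j - 1)) (2 * (k - j) - 1) : ℚ))
      = (((2*m+1 : ℕ) : ℚ) - 1) / (k : ℚ) * (Nat.choose (2*m+1 + k - 2) (2 * k - 1) : ℚ) := by
    have hQ : ∀ x ∈ Finset.range (K+1),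
        x ∉ (Finset.range (K+1)).filter (fun j' => j' ≤ m ∧ m < j' + k) →
        (-1:ℚ)^k * ((dickC (2*m+1) (x:ℤ) * dickC (2*m-1) ((K:ℤ) - (x:ℤ)) : ℤ) : ℚ) = 0 := by
      intro x hx hnx
      simp only [Finset.mem_filter, Finset.mem_range, not_and, not_lt] at hx hnx
      rcases Nat.lt_or_ge m x with hc | hc
      · rw [dickC_of_gt (n := 2*m+1) (by push_cast; omega)]
        push_cast
        ring
      · have hc2 : x + k ≤ m := hnx hx hc
        rw [dickC_of_gt (n := 2*m-1) (i := (K:ℤ) - (x:ℤ)) (by push_cast; omega)]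
        push_cast
        ring
    have hP : ∀ x ∈ Finset.range k,
        x ∉ (Finset.range k).filter (fun j => j ≤ m ∧ k ≤ m + j) →
        (((2*m+1 : ℕ) : ℚ) / (((m+1 + x : ℕ)) : ℚ)) *
          (Nat.choose (m+1 + x) (2 * x + 1) : ℚ) *
        (((((2*m+1 : ℕ) : ℚ) - 2) / (((m + (k - x - 1) : ℕ)) : ℚ)) *
          (Nat.choose (m + (k - x - 1)) (2 * (k - x) - 1) : ℚ)) = 0 := by
      intro x hx hnx
      simp only [Finset.mem_filter, Finset.mem_range, not_and, not_le] at hx hnx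
      rcases Nat.lt_or_ge m x with hc | hc
      · rw [Nat.choose_eq_zero_of_lt (by omega)]
        push_cast
        ring
      · have hc2 : m + x < k := hnx hx hc
        rw [Nat.choose_eq_zero_of_lt (n := m + (k - x - 1)) (by omega)]
        push_cast
        ring
    rw [← Finset.sum_subset (Finset.filter_subset (fun j => j ≤ m ∧ k ≤ m + j) (Finset.range k)) hP]
    have hbij : ∑ j ∈ (Finset.range k).filter (fun j => j ≤ m ∧ k ≤ m + j),
        ((((2*m+1 : ℕ) : ℚ) / (((m+1 + j : ℕ)) : ℚ)) *
          (Nat.choose (m+1 + j) (2 * j + 1) : ℚ) *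
        (((((2*m+1 : ℕ) : ℚ) - 2) / (((m + (k - j - 1) : ℕ)) : ℚ)) *
          (Nat.choose (m + (k - j - 1)) (2 * (k - j) - 1) : ℚ)))
        = ∑ j' ∈ (Finset.range (K+1)).filter (fun j' => j' ≤ m ∧ m < j' + k),
          (-1:ℚ)^k * ((dickC (2*m+1) (j':ℤ) * dickC (2*m-1) ((K:ℤ) - (j':ℤ)) : ℤ) : ℚ) := by
      apply Finset.sum_nbij' (fun j => m - j) (fun j' => m - j')
      · intro a ha
        simp only [Finset.mem_filter, Finset.mem_range] at ha ⊢
        omega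
      · intro a ha
        simp only [Finset.mem_filter, Finset.mem_range] at ha ⊢
        omega
      · intro a ha
        simp only [Finset.mem_filter, Finset.mem_range] at ha
        omega
      · intro a ha
        simp only [Finset.mem_filter, Finset.mem_range] at ha
        omega
      · intro j hj
        simp only [Finset.mem_filter, Finset.mem_range] at hj
        obtain ⟨hjk, hjm, hkm⟩ := hj
        have e0 : (K:ℤ) - ((m-j:ℕ):ℤ) = ((m - (k-j) : ℕ):ℤ) := by omega
        have e3 : m + (k - j - 1) = m + (k-j) - 1 := by omega
        rw [e0, dickC_coe, dickC_coe, e3, Int.cast_mul, Int.cast_mul, Int.cast_mul,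
            Int.cast_pow, Int.cast_pow, Int.cast_neg, Int.cast_one,
            Int.cast_natCast, Int.cast_natCast,
            lucasC_factor1 m j hjm, lucasC_factor2 m (k-j) (by omega) (by omega)]
        have hsign : (-1:ℚ)^k * (-1:ℚ)^(m-j) * (-1:ℚ)^(m-(k-j)) = 1 := by
          rw [← pow_add, ← pow_add,
              neg_one_pow_congr' (show (k + (m-j) + (m-(k-j))) % 2 = 0 % 2 by omega), pow_zero]
        have e2 : ((2*m-1:ℕ):ℚ) = 2*(m:ℚ) - 1 := by
          rw [Nat.cast_sub (by omega)]
          push_cast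
          ring
        rw [e2]
        push_cast
        linear_combination (-(2*(m:ℚ)+1) / ((m:ℚ)+1+(j:ℚ)) * ((m+1 + j).choose (2*j+1) : ℚ)) *
          ((2*(m:ℚ)-1) / ((m + (k-j) - 1:ℕ):ℚ) * ((m + (k-j) - 1).choose (2*(k-j)-1) : ℚ)) * hsign
    rw [hbij, Finset.sum_subset (Finset.filter_subset _ _) hQ, ← Finset.mul_sum,
        ← Int.cast_sum, hconv, dickC_coe]
    have hsign2 : (-1:ℚ)^k * (-1:ℚ)^K = 1 := by
      rw [← pow_add, neg_one_pow_congr' (show (k + K) % 2 = 0 % 2 by omega), pow_zero]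
    have hcl : ((lucasC (4*m) K : ℕ) : ℚ)
        = 2*(m:ℚ) / (k:ℚ) * ((2*m+1 + k - 2).choose (2*k-1) : ℚ) := by
      have e4 : 4*m - K = 2*m + k := by omega
      have e6 : (2*m+k).choose K = (2*m+k).choose (2*k) := by
        rw [show K = 2*m+k - 2*k by omega]
        exact Nat.choose_symm (by omega)
      rw [lucasC_cast (by omega) (by omega), e4, e6]
      have hnat := Nat.add_one_mul_choose_eq (2*m+k-1) (2*k-1)
      rw [show 2*m+k-1+1 = 2*m+k by omega,
          show 2*k-1+1 = 2*k by omega] at hnat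
      rw [show 2*m+1+k-2 = 2*m+k-1 by omega]
      have hk0 : (k:ℚ) ≠ 0 := Nat.cast_ne_zero.mpr (by omega)
      have hmk0 : ((2*m+k:ℕ):ℚ) ≠ 0 := Nat.cast_ne_zero.mpr (by omega)
      have hcast : ((2*m+k:ℕ):ℚ) * ((2*m+k-1).choose (2*k-1) : ℚ)
          = ((2*m+k).choose (2*k) : ℚ) * ((2*k:ℕ):ℚ) := by exact_mod_cast hnat
      rw [div_mul_eq_mul_div, div_mul_eq_mul_div, div_eq_div_iff hmk0 hk0]
      push_cast at hcast ⊢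
      linear_combination (-2*(m:ℚ)) * hcast
    push_cast
    rw [hcl]
    push_cast
    linear_combination (2*(m:ℚ) / (k:ℚ) * ((2*m+1 + k - 2).choose (2*k-1) : ℚ)) * hsign2
  rw [tConv, uClosed, show (2*m+1+1)/2 = m + 1 by omega, show (2*m+1-1)/2 = m by omega, h]
  ring
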